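/- First derivative of ψ at the base pressure: let γ > 1, ρ_k > 0, p_k > 0, c_k = √(γp_k/ρ_k) and μ² = (γ−1)/(γ+1), and let ψ be the piecewise function ψ(σ) = (2c_k/(γ−1))·((σ/p_k)^((γ−1)/(2γ)) − 1) for σ ≤ p_k and ψ(σ) = (σ − p_k)·((1−μ²)/(ρ_k(σ + μ²p_k)))^(1/2) for σ > p_k. Then ψ(p_k) = 0 and ψ has derivative ψ′(p_k) = 1/(ρ_k·c_k) at σ = p_k. -/

import Mathlib

/-- The velocity function `ψ` of the Lax-curve parametrisation: rarefaction branch for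
`σ ≤ p`, shock branch for `σ > p`, based at density `ρ` and pressure `p`. -/
noncomputable def laxPsi (γ ρ p : ℝ) (σ : ℝ) : ℝ :=
  if σ ≤ p then
    (2 * Real.sqrt (γ * p / ρ) / (γ - 1)) * ((σ / p) ^ ((γ - 1) / (2 * γ)) - 1)
  else
    (σ - p) * Real.sqrt ((1 - (γ - 1) / (γ + 1)) / (ρ * (σ + ((γ - 1) / (γ + 1)) * p)))

/-- First derivative of `ψ` at the base pressure: `ψ(p_k) = 0` and
`ψ′(p_k) = 1/(ρ_k·c_k)` with `c_k = √(γp_k/ρ_k)`. -/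
theorem laxPsi_value_and_deriv_at_base
    (γ ρk pk ck : ℝ) (hγ : 1 < γ) (hρ : 0 < ρk) (hp : 0 < pk)
    (hck : ck = Real.sqrt (γ * pk / ρk)) :
    laxPsi γ ρk pk pk = 0 ∧
    HasDerivAt (laxPsi γ ρk pk) (1 / (ρk * ck)) pk := by
  have hγ0 : (0:ℝ) < γ := by linarith
  have hγ1 : (0:ℝ) < γ - 1 := by linarith
  have hγp1 : (0:ℝ) < γ + 1 := by linarith
  have hm0 : 0 < (γ - 1) / (γ + 1) := by positivity
  have hm1 : (γ - 1) / (γ + 1) < 1 := by rw [div_lt_one hγp1]; linarith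
  have h1m : 0 < 1 - (γ - 1) / (γ + 1) := by linarith
  have hck0 : 0 < ck := by rw [hck]; positivity
  have key : ck ^ 2 * ρk = γ * pk := by
    rw [hck, Real.sq_sqrt (by positivity)]; field_simp
  have hval : laxPsi γ ρk pk pk = 0 := by
    simp [laxPsi, div_self hp.ne', Real.one_rpow]
  refine ⟨hval, ?_⟩
  -- left branch
  have h1 : HasDerivAt (fun σ : ℝ => σ / pk) (1 / pk) pk := by
    simpa using (hasDerivAt_id pk).div_const pk
  have h2 : HasDerivAt (fun σ : ℝ => (σ / pk) ^ ((γ - 1) / (2 * γ)))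
      (1 / pk * ((γ - 1) / (2 * γ)) * (pk / pk) ^ ((γ - 1) / (2 * γ) - 1)) pk :=
    h1.rpow_const (Or.inl (by rw [div_self hp.ne']; norm_num))
  have hfL : HasDerivAt (fun σ : ℝ =>
      (2 * Real.sqrt (γ * pk / ρk) / (γ - 1)) * ((σ / pk) ^ ((γ - 1) / (2 * γ)) - 1))
      (1 / (ρk * ck)) pk := by
    have h3 := (h2.sub_const 1).const_mul (2 * Real.sqrt (γ * pk / ρk) / (γ - 1))
    refine h3.congr_deriv ?_
    symm
    rw [← hck, div_self hp.ne', Real.one_rpow]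
    field_simp
    nlinarith [key, hck0, hρ, hp]
  have hL : HasDerivWithinAt (laxPsi γ ρk pk) (1 / (ρk * ck)) (Set.Iic pk) pk := by
    refine hfL.hasDerivWithinAt.congr (fun σ hσ => ?_) ?_
    · simp [laxPsi, Set.mem_Iic.mp hσ]
    · simp [laxPsi]
  -- right branch
  have hdne : ρk * (pk + (γ - 1) / (γ + 1) * pk) ≠ 0 := by positivity
  have hden : HasDerivAt (fun σ : ℝ => ρk * (σ + (γ - 1) / (γ + 1) * pk)) (ρk * 1) pk :=
    ((hasDerivAt_id pk).add_const _).const_mul ρk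
  have hu := (hasDerivAt_const pk (1 - (γ - 1) / (γ + 1))).div hden hdne
  have hargpos : 0 < (1 - (γ - 1) / (γ + 1)) / (ρk * (pk + (γ - 1) / (γ + 1) * pk)) := by
    positivity
  have hs := hu.sqrt hargpos.ne'
  have hg := ((hasDerivAt_id pk).sub_const pk).mul hs
  have hargval : (1 - (γ - 1) / (γ + 1)) / (ρk * (pk + (γ - 1) / (γ + 1) * pk))
      = (1 / (ρk * ck)) ^ 2 := by
    field_simp
    nlinarith [key, hck0, hρ, hp]
  have hfR : HasDerivAt (fun σ : ℝ => (σ - pk) *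
      Real.sqrt ((1 - (γ - 1) / (γ + 1)) / (ρk * (σ + (γ - 1) / (γ + 1) * pk))))
      (1 / (ρk * ck)) pk := by
    refine hg.congr_deriv ?_
    symm
    simp only [Pi.div_apply]
    rw [hargval, Real.sqrt_sq (by positivity)]
    simp
  have hR : HasDerivWithinAt (laxPsi γ ρk pk) (1 / (ρk * ck)) (Set.Ici pk) pk := by
    refine hfR.hasDerivWithinAt.congr (fun σ hσ => ?_) ?_
    · rcases eq_or_lt_of_le (Set.mem_Ici.mp hσ) with h | h
      · subst h; simp [hval]
      · simp [laxPsi, not_le.mpr h]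
    · simp [hval]
  have := hL.union hR
  rw [Set.Iic_union_Ici] at this
  exact hasDerivWithinAt_univ.mp this
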